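/- For every positive integer n, the n-th iterate of the operator x·d/dx applied to 1/(1-x) equals A_n(x)/(1-x)^{n+1} as formal power series, where A_n(x) is the n-th Eulerian polynomial. Equivalently, the sum over k ≥ 0 of k^n x^k equals A_n(x)/(1-x)^{n+1}. -/
import Mathlib

open Equiv Finset

/-- Number of descents of a permutation of `Fin n`, where `i` is a descent if
`π i > π (i+1)` or `i` is the last index. -/
def des (n : ℕ) (π : Equiv.Perm (Fin n)) : ℕ :=
  (Finset.univ.filter (fun i : Fin n =>
    (if h : (i : ℕ) + 1 < n then (((π ⟨(i : ℕ) + 1, h⟩ : Fin n) : ℕ) : ℤ) else (-1 : ℤ))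
      < (((π i : Fin n) : ℕ) : ℤ))).card

def wrd (n : ℕ) (π : Equiv.Perm (Fin n)) (k : ℕ) : ℤ :=
  if h : k < n then ((π ⟨k, h⟩ : Fin n) : ℕ) else -1

/-- Insertion of the maximal value at position `i`. -/
def ins (n : ℕ) (σ : Equiv.Perm (Fin n)) (i : Fin (n+1)) : Equiv.Perm (Fin (n+1)) :=
  ((finSuccEquiv' i).trans (Equiv.optionCongr σ)).trans (finSuccEquiv' (Fin.last n)).symm

lemma ins_at (n : ℕ) (σ : Equiv.Perm (Fin n)) (i : Fin (n+1)) :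
    ins n σ i i = Fin.last n := by
  simp [ins, finSuccEquiv'_at]

lemma ins_succAbove (n : ℕ) (σ : Equiv.Perm (Fin n)) (i : Fin (n+1)) (j : Fin n) :
    ins n σ i (i.succAbove j) = (σ j).castSucc := by
  simp [ins, finSuccEquiv'_succAbove, finSuccEquiv'_symm_some, Fin.succAbove_last]

lemma wrd_ins_lt (n : ℕ) (σ : Equiv.Perm (Fin n)) (i : Fin (n+1)) (k : ℕ) (h : k < (i:ℕ)) :
    wrd (n+1) (ins n σ i) k = wrd n σ k := by
  have hk : k < n := by omega
  have hk1 : k < n + 1 := by omega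
  rw [wrd, dif_pos hk1, wrd, dif_pos hk]
  have : (⟨k, hk1⟩ : Fin (n+1)) = i.succAbove ⟨k, hk⟩ := by
    rw [Fin.succAbove_of_castSucc_lt]
    · rfl
    · simpa [Fin.lt_def] using h
  rw [this, ins_succAbove]
  simp

lemma wrd_ins_eq (n : ℕ) (σ : Equiv.Perm (Fin n)) (i : Fin (n+1)) :
    wrd (n+1) (ins n σ i) i = (n : ℤ) := by
  rw [wrd, dif_pos i.isLt]
  simp only [Fin.eta]
  rw [ins_at]
  simp [Fin.last]

lemma wrd_ins_gt (n : ℕ) (σ : Equiv.Perm (Fin n)) (i : Fin (n+1)) (k : ℕ) (h : (i:ℕ) < k) :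
    wrd (n+1) (ins n σ i) k = wrd n σ (k-1) := by
  by_cases hk : k < n + 1
  · have hk1 : k - 1 < n := by omega
    rw [wrd, dif_pos hk, wrd, dif_pos hk1]
    have : (⟨k, hk⟩ : Fin (n+1)) = i.succAbove ⟨k-1, hk1⟩ := by
      rw [Fin.succAbove_of_le_castSucc]
      · ext; simp; omega
      · simp [Fin.le_def]; omega
    rw [this, ins_succAbove]
    simp
  · rw [wrd, dif_neg hk, wrd, dif_neg (by omega)]



lemma wrd_lt (n : ℕ) (π : Equiv.Perm (Fin n)) (k : ℕ) : wrd n π k < n := by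
  rw [wrd]
  split
  · exact_mod_cast (π ⟨k, ‹_›⟩).isLt
  · omega

lemma dsc_iff (n : ℕ) (π : Equiv.Perm (Fin n)) (i : Fin n) :
    ((if h : (i : ℕ) + 1 < n then (((π ⟨(i : ℕ) + 1, h⟩ : Fin n) : ℕ) : ℤ) else (-1 : ℤ))
      < (((π i : Fin n) : ℕ) : ℤ)) ↔ wrd n π ((i:ℕ)+1) < wrd n π (i:ℕ) := by
  rw [wrd, wrd, dif_pos i.isLt, Fin.eta]

lemma des_eq (n : ℕ) (π : Equiv.Perm (Fin n)) :
    des n π = (Finset.univ.filter (fun i : Fin n => wrd n π ((i:ℕ)+1) < wrd n π (i:ℕ))).card := by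
  rw [des]
  congr 1
  exact Finset.filter_congr (fun i _ => by rw [dsc_iff])
lemma dsc_ins (n : ℕ) (σ : Equiv.Perm (Fin n)) (i : Fin (n+1)) (j : Fin n) :
    (wrd (n+1) (ins n σ i) (((i.succAbove j : Fin (n+1)):ℕ)+1) <
      wrd (n+1) (ins n σ i) ((i.succAbove j : Fin (n+1)):ℕ)) ↔
    (((j:ℕ)+1 ≠ (i:ℕ)) ∧ wrd n σ ((j:ℕ)+1) < wrd n σ (j:ℕ)) := by
  by_cases hji : (j:ℕ) < (i:ℕ)
  · have hq : ((i.succAbove j : Fin (n+1)):ℕ) = (j:ℕ) := by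
      rw [Fin.succAbove_of_castSucc_lt _ _ (by simpa [Fin.lt_def] using hji)]
      rfl
    rw [hq]
    by_cases h1 : (j:ℕ)+1 = (i:ℕ)
    · rw [h1, wrd_ins_eq, wrd_ins_lt n σ i _ hji]
      simp only [h1, ne_eq, not_true_eq_false, false_and, iff_false, not_lt]
      exact le_of_lt (wrd_lt n σ j)
    · have h2 : (j:ℕ)+1 < (i:ℕ) := by omega
      rw [wrd_ins_lt n σ i _ h2, wrd_ins_lt n σ i _ hji]
      simp [h1]
  · have hij : (i:ℕ) ≤ (j:ℕ) := by omega
    have hq : ((i.succAbove j : Fin (n+1)):ℕ) = (j:ℕ)+1 := by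
      rw [Fin.succAbove_of_le_castSucc _ _ (by simpa [Fin.le_def] using hij)]
      rfl
    rw [hq, wrd_ins_gt n σ i _ (by omega), wrd_ins_gt n σ i _ (by omega)]
    simp only [Nat.add_sub_cancel, iff_and_self]
    intro _
    omega

lemma des_ins (n : ℕ) (σ : Equiv.Perm (Fin n)) (i : Fin (n+1)) :
    des (n+1) (ins n σ i) =
      1 + (Finset.univ.filter (fun j : Fin n =>
        ((j:ℕ)+1 ≠ (i:ℕ)) ∧ wrd n σ ((j:ℕ)+1) < wrd n σ (j:ℕ))).card := by
  rw [des_eq, Finset.card_filter, Fin.sum_univ_succAbove _ i, Finset.card_filter]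
  congr 1
  · rw [if_pos]
    rw [wrd_ins_eq, wrd_ins_gt n σ i _ (by omega)]
    simp only [Nat.add_sub_cancel]
    exact wrd_lt n σ i
  · exact Finset.sum_congr rfl (fun j _ => by rw [if_congr (dsc_ins n σ i j) rfl rfl])

/-- The descent set of a permutation. -/
def dset (n : ℕ) (σ : Equiv.Perm (Fin n)) : Finset (Fin n) :=
  Finset.univ.filter (fun j : Fin n => wrd n σ ((j:ℕ)+1) < wrd n σ (j:ℕ))

lemma des_eq_dset (n : ℕ) (σ : Equiv.Perm (Fin n)) : des n σ = (dset n σ).card :=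
  des_eq n σ

def dsetAvoid (n : ℕ) (σ : Equiv.Perm (Fin n)) (i : Fin (n+1)) : Finset (Fin n) :=
  Finset.univ.filter (fun j : Fin n =>
    ((j:ℕ)+1 ≠ (i:ℕ)) ∧ wrd n σ ((j:ℕ)+1) < wrd n σ (j:ℕ))

lemma des_ins' (n : ℕ) (σ : Equiv.Perm (Fin n)) (i : Fin (n+1)) :
    des (n+1) (ins n σ i) = 1 + (dsetAvoid n σ i).card :=
  des_ins n σ i

lemma dsetAvoid_zero (n : ℕ) (σ : Equiv.Perm (Fin n)) :
    dsetAvoid n σ 0 = dset n σ := by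
  apply Finset.filter_congr
  intro j _
  simp

lemma dsetAvoid_succ (n : ℕ) (σ : Equiv.Perm (Fin n)) (j₀ : Fin n) :
    dsetAvoid n σ j₀.succ = (dset n σ).erase j₀ := by
  ext j
  simp only [dsetAvoid, dset, Finset.mem_filter, Finset.mem_erase, Finset.mem_univ, true_and,
    Fin.val_succ, ne_eq, Nat.add_right_cancel_iff, and_congr_left_iff]
  intro _
  rw [not_iff_not, Fin.val_eq_val]

/-- The Eulerian polynomial `A_n(x) = ∑_{π ∈ S_n} x^{des π}`. -/
noncomputable def eulerianPoly (n : ℕ) : Polynomial ℚ :=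
  ∑ π : Equiv.Perm (Fin n), Polynomial.X ^ des n π


open Polynomial in
lemma pow_identity (n d : ℕ) (hdn : d ≤ n) :
    (X:ℚ[X])^(d+1) + (d • (X:ℚ[X])^d + (n - d) • (X:ℚ[X])^(d+1))
      = X * (1-X) * Polynomial.derivative ((X:ℚ[X])^d) + ((n:ℚ[X])+1) * X * X^d := by
  rcases d with _ | m
  · simp only [nsmul_eq_mul, Nat.cast_zero, Nat.sub_zero, pow_zero, derivative_one,
      mul_zero, zero_mul, zero_add, mul_one, pow_one]
    ring
  · have hm : m + 1 ≤ n := hdn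
    simp only [derivative_X_pow, Nat.add_sub_cancel, nsmul_eq_mul, map_natCast]
    push_cast [Nat.cast_sub hm]
    ring

open Polynomial in
lemma sum_ins (n : ℕ) (σ : Equiv.Perm (Fin n)) :
    ∑ i : Fin (n+1), (X : ℚ[X]) ^ des (n+1) (ins n σ i) =
      X * (1-X) * Polynomial.derivative ((X:ℚ[X]) ^ des n σ) + ((n : ℚ[X])+1) * X * X ^ des n σ := by
  classical
  have hdn : (dset n σ).card ≤ n := by
    simpa using Finset.card_le_univ (dset n σ)
  have hsum : ∑ i : Fin (n+1), (X : ℚ[X]) ^ des (n+1) (ins n σ i)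
      = X ^ ((dset n σ).card + 1)
        + ∑ j₀ : Fin n, (if j₀ ∈ dset n σ then (X:ℚ[X]) ^ (dset n σ).card
            else X ^ ((dset n σ).card + 1)) := by
    simp only [des_ins']
    rw [Fin.sum_univ_succ, dsetAvoid_zero, add_comm 1 (dset n σ).card]
    congr 1
    apply Finset.sum_congr rfl
    intro j₀ _
    rw [dsetAvoid_succ]
    by_cases hj : j₀ ∈ dset n σ
    · rw [if_pos hj, Finset.card_erase_of_mem hj]
      have hpos : 1 ≤ (dset n σ).card := Finset.card_pos.mpr ⟨j₀, hj⟩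
      congr 1
      omega
    · rw [if_neg hj, Finset.erase_eq_of_notMem hj, add_comm]
  rw [hsum]
  rw [Finset.sum_ite (p := fun j₀ : Fin n => j₀ ∈ dset n σ) (s := Finset.univ)
    (fun _ => (X:ℚ[X]) ^ (dset n σ).card) (fun _ => (X:ℚ[X]) ^ ((dset n σ).card + 1))]
  rw [Finset.sum_const, Finset.sum_const]
  have h1 : Finset.univ.filter (fun j₀ : Fin n => j₀ ∈ dset n σ) = dset n σ := by
    ext j; simp
  have h2 : (Finset.univ.filter (fun j₀ : Fin n => ¬ j₀ ∈ dset n σ)).card = n - (dset n σ).card := by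
    have : Finset.univ.filter (fun j₀ : Fin n => ¬ j₀ ∈ dset n σ) = (dset n σ)ᶜ := by
      ext j; simp
    rw [this, Finset.card_compl, Fintype.card_fin]
  rw [h1, h2, des_eq_dset]
  exact pow_identity n (dset n σ).card hdn

lemma ins_bijective (n : ℕ) :
    Function.Bijective (fun p : Equiv.Perm (Fin n) × Fin (n+1) => ins n p.1 p.2) := by
  rw [Fintype.bijective_iff_injective_and_card]
  constructor
  · rintro ⟨σ, i⟩ ⟨σ', i'⟩ h
    simp only at h
    have hi : i = i' := by
      by_contra hne
      obtain ⟨j, hj⟩ := Fin.exists_succAbove_eq hne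
      have h1 : ins n σ i i = Fin.last n := ins_at n σ i
      have h2 : ins n σ' i' i = (σ' j).castSucc := by rw [← hj, ins_succAbove]
      rw [h, h2] at h1
      exact absurd h1 (Fin.castSucc_lt_last (σ' j)).ne
    subst hi
    have hσ : σ = σ' := by
      ext j
      have h3 := congrArg (fun e : Equiv.Perm (Fin (n+1)) => e (i.succAbove j)) h
      simp only [ins_succAbove] at h3
      exact congrArg Fin.val (Fin.castSucc_injective n h3)
    simp [hσ]
  · simp [Fintype.card_perm, Nat.factorial_succ]
    ring

open Polynomial in
lemma euler_rec (n : ℕ) :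
    eulerianPoly (n+1) = X * (1-X) * Polynomial.derivative (eulerianPoly n)
      + ((n : ℚ[X])+1) * X * eulerianPoly n := by
  have hre := Fintype.sum_bijective _ (ins_bijective n)
    (fun p : Equiv.Perm (Fin n) × Fin (n+1) => (X:ℚ[X]) ^ des (n+1) (ins n p.1 p.2))
    (fun π : Equiv.Perm (Fin (n+1)) => (X:ℚ[X]) ^ des (n+1) π) (fun p => rfl)
  rw [eulerianPoly, ← hre, Fintype.sum_prod_type, eulerianPoly, Polynomial.derivative_sum,
    Finset.mul_sum, Finset.mul_sum, ← Finset.sum_add_distrib]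
  exact Finset.sum_congr rfl (fun σ _ => sum_ins n σ)

lemma mk_succ (n : ℕ) : (PowerSeries.mk (fun k => (k:ℚ)^(n+1)) : PowerSeries ℚ)
    = PowerSeries.X * (PowerSeries.derivative ℚ (PowerSeries.mk fun k => (k:ℚ)^n)) := by
  ext k
  rcases k with _ | k
  · simp [PowerSeries.coeff_zero_X_mul]
  · rw [PowerSeries.coeff_mk, PowerSeries.coeff_succ_X_mul, PowerSeries.coeff_derivative,
      PowerSeries.coeff_mk]
    push_cast
    ring

lemma euler_zero : eulerianPoly 0 = 1 := by
  simp [eulerianPoly, des, Finset.univ_eq_empty]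

lemma base_case : PowerSeries.mk (fun k => (k:ℚ)^0) * (1 - PowerSeries.X)^(0+1)
    = ((eulerianPoly 0 : Polynomial ℚ) : PowerSeries ℚ) := by
  rw [euler_zero, Polynomial.coe_one, pow_one, mul_sub, mul_one]
  ext k
  rcases k with _ | k
  · simp
  · simp [PowerSeries.coeff_succ_mul_X]

lemma coe_natCast' (m : ℕ) : ((m : Polynomial ℚ) : PowerSeries ℚ) = (m : PowerSeries ℚ) := by
  rw [← Polynomial.coeToPowerSeries.ringHom_apply, map_natCast]

lemma deriv_pow_sub (m : ℕ) :
    PowerSeries.derivative ℚ ((1 - PowerSeries.X)^(m+1) : PowerSeries ℚ)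
      = -(((m:PowerSeries ℚ)+1) * (1 - PowerSeries.X)^m) := by
  rw [Derivation.leibniz_pow]
  simp only [map_sub, Derivation.map_one_eq_zero, PowerSeries.derivative_X, zero_sub,
    Nat.add_sub_cancel, smul_eq_mul, nsmul_eq_mul]
  push_cast
  ring

theorem summation_formula_eulerian' (n : ℕ) :
    PowerSeries.mk (fun k => (k : ℚ) ^ n) * (1 - PowerSeries.X) ^ (n + 1)
      = (eulerianPoly n : PowerSeries ℚ) := by
  induction n with
  | zero => exact base_case
  | succ m ih =>
    have hmk := mk_succ m
    have hder := congrArg (PowerSeries.derivative ℚ) ih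
    rw [Derivation.leibniz, deriv_pow_sub] at hder
    simp only [smul_eq_mul] at hder
    have hcoe : ((eulerianPoly (m+1) : Polynomial ℚ) : PowerSeries ℚ)
        = PowerSeries.X * (1 - PowerSeries.X)
            * (PowerSeries.derivative ℚ ((eulerianPoly m : Polynomial ℚ) : PowerSeries ℚ))
          + ((m : PowerSeries ℚ)+1) * PowerSeries.X
            * ((eulerianPoly m : Polynomial ℚ) : PowerSeries ℚ) := by
      rw [euler_rec m, PowerSeries.derivative_coe]
      simp only [Polynomial.coe_add, Polynomial.coe_mul, Polynomial.coe_X, Polynomial.coe_one,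
        Polynomial.coe_sub, coe_natCast']
    rw [hcoe]
    linear_combination ((1 - PowerSeries.X)^(m+2)) * hmk
      + (PowerSeries.X * (1 - PowerSeries.X)) * hder
      + (((m : PowerSeries ℚ)+1) * PowerSeries.X) * ih

/-- `∑_{k ≥ 0} k^n x^k = A_n(x)/(1-x)^{n+1}` as formal power series. -/
theorem summation_formula_eulerian (n : ℕ) (hn : 1 ≤ n) :
    PowerSeries.mk (fun k => (k : ℚ) ^ n) * (1 - PowerSeries.X) ^ (n + 1)
      = (eulerianPoly n : PowerSeries ℚ) := by
  exact summation_formula_eulerian' n
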